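/- (Cauchy's theorem in bicomplex space.) Let G ⊆ ℂ×ℂ be open, let φ₁, φ₂ : ℂ×ℂ → ℂ be ℂ-differentiable on G and satisfy the bicomplex Cauchy–Riemann equations on G, and set ψ = (φ₁,φ₂). Let p : [r,s] → G be a continuously differentiable closed curve (p(r) = p(s)) which bounds a smooth surface in G, in the sense that there is a continuously differentiable map H : [0,1]×[r,s] → G with H(1,t) = p(t) for all t, H(h,r) = H(h,s) for all h, and H(0,t) independent of t. Then ∫_r^s ψ(p(t)) ⊙ p′(t) dt = 0. -/

import Mathlib

open Set Metric intervalIntegral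

noncomputable section

/-- Primitive of a holomorphic function on a ball. -/
lemma exists_primitive_on_ball {F : ℂ → ℂ} {w₀ : ℂ} {R : ℝ} (hR : 0 < R)
    (hF : DifferentiableOn ℂ F (ball w₀ (2*R))) :
    ∃ 𝔉 : ℂ → ℂ, ∀ w ∈ ball w₀ R, HasDerivAt 𝔉 (F w) w := by
  set a : ℕ → ℂ := fun n => (n.factorial : ℂ)⁻¹ * iteratedDeriv n F w₀ with ha
  set ρ : ℝ := 3*R/2 with hρ
  have hρ0 : 0 ≤ ρ := by rw [hρ]; linarith
  have hz1 : (w₀ + (ρ : ℂ)) ∈ ball w₀ (2*R) := by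
    rw [mem_ball, Complex.dist_eq, add_sub_cancel_left, Complex.norm_real, Real.norm_eq_abs,
      abs_of_nonneg hρ0]
    rw [hρ]; linarith
  have hsum := Complex.hasSum_taylorSeries_on_ball hF hz1
  have hterm : ∀ n : ℕ, (n.factorial : ℂ)⁻¹ • ((w₀ + (ρ:ℂ)) - w₀) ^ n • iteratedDeriv n F w₀
      = a n * (ρ : ℂ) ^ n := by
    intro n
    simp only [add_sub_cancel_left, smul_eq_mul, ha]
    ring
  have hbdd : ∃ M : ℝ, 0 ≤ M ∧ ∀ n : ℕ, ‖a n‖ * ρ ^ n ≤ M := by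
    have h0 : Filter.Tendsto (fun n => a n * (ρ : ℂ) ^ n) Filter.atTop (nhds 0) := by
      have := hsum.summable.tendsto_atTop_zero
      simpa only [hterm] using this
    have hb : BddAbove (Set.range fun n => ‖a n * (ρ : ℂ) ^ n‖) :=
      (h0.norm.bddAbove_range)
    obtain ⟨M, hM⟩ := hb
    have hnorm : ∀ n : ℕ, ‖a n * (ρ:ℂ) ^ n‖ = ‖a n‖ * ρ ^ n := by
      intro n
      rw [norm_mul, norm_pow, Complex.norm_real, Real.norm_of_nonneg hρ0]
    refine ⟨M, le_trans (norm_nonneg _) (hM ⟨0, rfl⟩), fun n => ?_⟩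
    have := hM ⟨n, rfl⟩
    simpa [hnorm n, abs_of_nonneg hρ0] using this
  obtain ⟨M, hM0, hM⟩ := hbdd
  refine ⟨fun z => ∑' n : ℕ, a n / ((n:ℂ)+1) * (z - w₀) ^ (n+1), fun w hw => ?_⟩
  have key : HasDerivAt (fun z => ∑' n : ℕ, a n / ((n:ℂ)+1) * (z - w₀) ^ (n+1))
      (∑' n : ℕ, a n * (w - w₀) ^ n) w := by
    refine hasDerivAt_tsum_of_isPreconnected
      (u := fun n => M * (2/3 : ℝ) ^ n) (g' := fun n z => a n * (z - w₀) ^ n)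
      ?_ isOpen_ball (convex_ball w₀ R).isPreconnected ?_ ?_ (mem_ball_self hR) ?_ hw
    · exact (summable_geometric_of_lt_one (by norm_num) (by norm_num)).mul_left M
    · intro n z hz
      have hne : ((n:ℂ)+1) ≠ 0 := Nat.cast_add_one_ne_zero n
      have h1 : HasDerivAt (fun z : ℂ => (z - w₀) ^ (n+1))
          (((n:ℂ)+1) * (z - w₀) ^ n) z := by
        have := ((hasDerivAt_id z).sub_const w₀).pow (n+1)
        simp at this; exact this
      have := h1.const_mul (a n / ((n:ℂ)+1))
      refine this.congr_deriv ?_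
      show a n / ((n:ℂ)+1) * (((n:ℂ)+1) * (z - w₀) ^ n) = a n * (z - w₀) ^ n
      rw [div_mul_eq_mul_div, div_eq_iff hne]
      ring
    · intro n y hy
      have hyb : ‖y - w₀‖ ≤ R := by
        rw [mem_ball, dist_eq_norm] at hy; exact hy.le
      have h1 : ‖a n * (y - w₀) ^ n‖ ≤ ‖a n‖ * R ^ n := by
        rw [norm_mul, norm_pow]
        gcongr
      refine h1.trans ?_
      calc ‖a n‖ * R ^ n = (‖a n‖ * ρ^n) * ((2/3)^n) := by
            rw [mul_assoc, ← mul_pow]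
            congr 2
            rw [hρ]; ring
          _ ≤ M * (2/3)^n := mul_le_mul_of_nonneg_right (hM n) (by positivity)
    · have h0 : ∀ n : ℕ, (0:ℂ) = a n / ((n:ℂ)+1) * (w₀ - w₀)^(n+1) := fun n => by simp
      exact Summable.congr summable_zero h0
  have heq : (∑' n : ℕ, a n * (w - w₀) ^ n) = F w := by
    have := Complex.taylorSeries_eq_on_ball' (ball_subset_ball (by linarith) hw) hF
    rw [← this]
  rwa [heq] at key

lemma local_primitive {G : Set (ℂ × ℂ)} (hG : IsOpen G) {f : ℂ × ℂ → ℂ}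
    (hdf : ∀ q ∈ G, DifferentiableAt ℂ f q) {c : ℂ} (hc : ‖c‖ = 1)
    (hkey : ∀ q ∈ G, fderiv ℂ f q (0, 1) = c * fderiv ℂ f q (1, 0))
    {q₀ : ℂ × ℂ} (hq₀ : q₀ ∈ G) :
    ∃ U : Set (ℂ × ℂ), IsOpen U ∧ q₀ ∈ U ∧
      ∃ 𝔉 : ℂ → ℂ, ∀ q ∈ U, HasDerivAt 𝔉 (f q) (q.1 + c * q.2) := by
  -- master formula for the derivative
  have hDv : ∀ q ∈ G, ∀ v : ℂ × ℂ,
      fderiv ℂ f q v = fderiv ℂ f q (1, 0) * (v.1 + c * v.2) := by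
    intro q hq v
    have hv : v = v.1 • ((1 : ℂ), (0 : ℂ)) + v.2 • ((0 : ℂ), (1 : ℂ)) := by
      ext <;> simp
    calc fderiv ℂ f q v
        = fderiv ℂ f q (v.1 • ((1:ℂ), (0:ℂ)) + v.2 • ((0:ℂ), (1:ℂ))) := by rw [← hv]
      _ = v.1 • fderiv ℂ f q (1, 0) + v.2 • fderiv ℂ f q (0, 1) := by
          rw [map_add, map_smul, map_smul]
      _ = fderiv ℂ f q (1, 0) * (v.1 + c * v.2) := by
          rw [hkey q hq]; simp [smul_eq_mul]; ring
  obtain ⟨ε, hε, hball⟩ := Metric.isOpen_iff.mp hG q₀ hq₀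
  set δ : ℝ := ε / 4 with hδdef
  have hδ : 0 < δ := by positivity
  have hsubG : ball q₀ (2 * δ) ⊆ G := by
    refine (ball_subset_ball ?_).trans hball
    rw [hδdef]; linarith
  set w₀ : ℂ := q₀.1 + c * q₀.2 with hw₀
  set A : ℂ → ℂ × ℂ := fun w => (q₀.1 + (w - w₀), q₀.2) with hA
  have hAdist : ∀ w : ℂ, dist (A w) q₀ = dist w w₀ := by
    intro w
    rw [hA]
    simp only [Prod.dist_eq]
    rw [Complex.dist_eq, Complex.dist_eq]
    rw [add_sub_cancel_left, sub_self, norm_zero, max_eq_left (norm_nonneg _),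
      Complex.dist_eq]
  have heA : ∀ w : ℂ, (A w).1 + c * (A w).2 = w := by
    intro w
    rw [hA, hw₀]; simp; ring
  -- F = f ∘ A is holomorphic on ball w₀ (2δ)
  have hFderiv : ∀ w ∈ ball w₀ (2*δ), HasDerivAt (fun w => f (A w))
      (fderiv ℂ f (A w) (1, 0)) w := by
    intro w hw
    have hAw : A w ∈ G := hsubG (by rw [mem_ball, hAdist]; exact hw)
    have hAd : HasDerivAt A ((1 : ℂ), (0 : ℂ)) w := by
      rw [hA]
      exact (((hasDerivAt_id w).sub_const w₀).const_add q₀.1).prodMk (hasDerivAt_const w q₀.2)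
    exact ((hdf _ hAw).hasFDerivAt.comp_hasDerivAt w hAd)
  have hFdiff : DifferentiableOn ℂ (fun w => f (A w)) (ball w₀ (2*δ)) :=
    fun w hw => ((hFderiv w hw).differentiableAt).differentiableWithinAt
  obtain ⟨𝔉, h𝔉⟩ := exists_primitive_on_ball hδ hFdiff
  refine ⟨ball q₀ (δ/2), isOpen_ball, mem_ball_self (by positivity), 𝔉, ?_⟩
  intro q hq
  set w : ℂ := q.1 + c * q.2 with hwdef
  have hwmem : w ∈ ball w₀ δ := by
    rw [mem_ball, Complex.dist_eq, hwdef, hw₀]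
    have : q.1 + c * q.2 - (q₀.1 + c * q₀.2) = (q.1 - q₀.1) + c * (q.2 - q₀.2) := by ring
    rw [this]
    have h1 : ‖q.1 - q₀.1‖ ≤ dist q q₀ := by
      rw [← Complex.dist_eq]; rw [Prod.dist_eq]; exact le_max_left _ _
    have h2 : ‖q.2 - q₀.2‖ ≤ dist q q₀ := by
      rw [← Complex.dist_eq]; rw [Prod.dist_eq]; exact le_max_right _ _
    have hd : dist q q₀ < δ/2 := hq
    calc ‖(q.1 - q₀.1) + c * (q.2 - q₀.2)‖
        ≤ ‖q.1 - q₀.1‖ + ‖c * (q.2 - q₀.2)‖ := norm_add_le _ _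
      _ = ‖q.1 - q₀.1‖ + ‖q.2 - q₀.2‖ := by
          rw [norm_mul]
          have : ‖c‖ = 1 := hc
          rw [this, one_mul]
      _ < δ/2 + δ/2 := by
          apply add_lt_add_of_le_of_lt (h1.trans hd.le) (lt_of_le_of_lt h2 hd)
      _ = δ := by ring
  have hder := h𝔉 w hwmem
  -- it remains to show f (A w) = f q
  have hfeq : f (A w) = f q := by
    set q' : ℂ × ℂ := A w with hq'
    have hq'mem : q' ∈ ball q₀ (2*δ) := by
      rw [hq', mem_ball, hAdist]
      exact (mem_ball.mp hwmem).trans (by linarith)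
    have hqmem : q ∈ ball q₀ (2*δ) := by
      refine mem_ball.mpr (lt_of_lt_of_le hq ?_); linarith
    have hseg : ∀ τ : ℝ, τ ∈ Icc (0:ℝ) 1 → q + τ • (q' - q) ∈ ball q₀ (2*δ) := by
      intro τ hτ
      have := (convex_ball q₀ (2*δ)) hqmem hq'mem (by linarith [hτ.1, hτ.2] : (0:ℝ) ≤ 1 - τ)
        (hτ.1) (by ring : (1 - τ) + τ = 1)
      convert this using 1
      rw [smul_sub]
      module
    have hφ : ∀ τ ∈ Icc (0:ℝ) 1, HasDerivAt (fun τ : ℝ => f (q + τ • (q' - q))) 0 τ := by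
      intro τ hτ
      have hmem := hsubG (hseg τ hτ)
      have hγ : HasDerivAt (fun τ : ℝ => q + τ • (q' - q)) (q' - q) τ := by
        have h1 : HasDerivAt (fun τ : ℝ => τ • (q' - q)) ((1:ℝ) • (q' - q)) τ :=
          (hasDerivAt_id τ).smul_const (q' - q)
        simpa using h1.const_add q
      have := (((hdf _ hmem).hasFDerivAt.restrictScalars ℝ).comp_hasDerivAt τ hγ)
      have hval : fderiv ℂ f (q + τ • (q' - q)) (q' - q) = 0 := by
        rw [hDv _ hmem]
        have : (q' - q).1 + c * (q' - q).2 = 0 := by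
          have h1 : q'.1 + c * q'.2 = w := heA w
          simp only [Prod.fst_sub, Prod.snd_sub]
          linear_combination h1 + hwdef
        rw [this, mul_zero]
      rw [ContinuousLinearMap.coe_restrictScalars'] at this
      rwa [hval] at this
    have hFTC := intervalIntegral.integral_eq_sub_of_hasDerivAt
      (f := fun τ : ℝ => f (q + τ • (q' - q))) (f' := fun _ => (0:ℂ))
      (fun τ hτ => hφ τ (by rwa [uIcc_of_le zero_le_one] at hτ))
      (intervalIntegrable_const)
    simp only [intervalIntegral.integral_zero] at hFTC
    have : f (q + (1:ℝ) • (q' - q)) = f (q + (0:ℝ) • (q' - q)) :=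
      sub_eq_zero.mp hFTC.symm
    simpa using this
  rwa [hfeq] at hder

/-- FTC along an edge. -/
lemma ftc_edge {V g : ℝ → ℂ} {t₁ t₂ : ℝ} (ht : t₁ ≤ t₂)
    (hd : ∀ t ∈ Icc t₁ t₂, HasDerivWithinAt V (g t) (Icc t₁ t₂) t)
    (hgi : ContinuousOn g (Icc t₁ t₂)) :
    ∫ t in t₁..t₂, g t = V t₂ - V t₁ := by
  refine intervalIntegral.integral_eq_sub_of_hasDeriv_right_of_le ht
    (fun t htm => (hd t htm).continuousWithinAt) ?_ ?_
  · intro t htm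
    have h1 := (hd t (Ioo_subset_Icc_self htm)).hasDerivAt (Icc_mem_nhds htm.1 htm.2)
    exact h1.hasDerivWithinAt
  · exact (hgi.mono (by rw [uIcc_of_le ht])).intervalIntegrable

/-- Derivative of `𝔉 ∘ e ∘ H ∘ L` along a line `L`. -/
lemma edge_hasDeriv {H : ℝ × ℝ → ℂ × ℂ} {R : Set (ℝ × ℝ)} {f : ℂ × ℂ → ℂ} {c : ℂ}
    {𝔉 : ℂ → ℂ} {L : ℝ → ℝ × ℝ} {w : ℝ × ℝ} (hL : ∀ τ, HasDerivAt L w τ)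
    {I : Set ℝ} (hsub : MapsTo L I R)
    (hHdiff : ∀ z ∈ R, HasFDerivWithinAt H (fderivWithin ℝ H R z) R z)
    (hprim : ∀ τ ∈ I, HasDerivAt 𝔉 (f (H (L τ))) ((H (L τ)).1 + c * (H (L τ)).2))
    {t : ℝ} (ht : t ∈ I) :
    HasDerivWithinAt (fun τ => 𝔉 ((H (L τ)).1 + c * (H (L τ)).2))
      (f (H (L t)) * ((fderivWithin ℝ H R (L t) w).1 + c * (fderivWithin ℝ H R (L t) w).2))
      I t := by
  have hcomp : HasDerivWithinAt (fun τ => H (L τ)) (fderivWithin ℝ H R (L t) w) I t :=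
    (hHdiff (L t) (hsub ht)).comp_hasDerivWithinAt t ((hL t).hasDerivWithinAt) hsub
  have h1 : HasDerivWithinAt (fun τ => (H (L τ)).1) ((fderivWithin ℝ H R (L t) w).1) I t :=
    ((ContinuousLinearMap.fst ℝ ℂ ℂ).hasFDerivAt.comp_hasDerivWithinAt t hcomp)
  have h2 : HasDerivWithinAt (fun τ => (H (L τ)).2) ((fderivWithin ℝ H R (L t) w).2) I t :=
    ((ContinuousLinearMap.snd ℝ ℂ ℂ).hasFDerivAt.comp_hasDerivWithinAt t hcomp)
  have hu : HasDerivWithinAt (fun τ => (H (L τ)).1 + c * (H (L τ)).2)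
      ((fderivWithin ℝ H R (L t) w).1 + c * (fderivWithin ℝ H R (L t) w).2) I t :=
    h1.add (h2.const_mul c)
  exact (hprim t ht).comp_hasDerivWithinAt t hu

lemma key_lemma {G : Set (ℂ × ℂ)} (hG : IsOpen G) {f : ℂ × ℂ → ℂ}
    (hdf : ∀ q ∈ G, DifferentiableAt ℂ f q) {c : ℂ} (hc : ‖c‖ = 1)
    (hkey : ∀ q ∈ G, fderiv ℂ f q (0, 1) = c * fderiv ℂ f q (1, 0))
    {r s : ℝ} (hrs : r < s) {p p' : ℝ → ℂ × ℂ}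
    (hderiv : ∀ t ∈ Icc r s, HasDerivAt p (p' t) t)
    (H : ℝ × ℝ → ℂ × ℂ)
    (hH : ContDiffOn ℝ 1 H (Icc 0 1 ×ˢ Icc r s))
    (hHG : ∀ q ∈ Icc (0 : ℝ) 1 ×ˢ Icc r s, H q ∈ G)
    (hH1 : ∀ t ∈ Icc r s, H (1, t) = p t)
    (hHclosed : ∀ h ∈ Icc (0 : ℝ) 1, H (h, r) = H (h, s))
    (hH0 : ∀ t ∈ Icc r s, H (0, t) = H (0, r)) :
    ∫ t in r..s, f (p t) * ((p' t).1 + c * (p' t).2) = 0 := by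
  set R : Set (ℝ × ℝ) := Icc (0:ℝ) 1 ×ˢ Icc r s with hRdef
  have hRu : UniqueDiffOn ℝ R := (uniqueDiffOn_Icc zero_lt_one).prod (uniqueDiffOn_Icc hrs)
  have hRc : IsCompact R := isCompact_Icc.prod isCompact_Icc
  set D : ℝ × ℝ → (ℝ × ℝ) →L[ℝ] ℂ × ℂ := fun z => fderivWithin ℝ H R z with hDdef
  set g : ℝ × ℝ → ℂ := fun z => f (H z) with hgdef
  set ut : ℝ × ℝ → ℂ := fun z => (D z (0,1)).1 + c * (D z (0,1)).2 with hutdef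
  set uh : ℝ × ℝ → ℂ := fun z => (D z (1,0)).1 + c * (D z (1,0)).2 with huhdef
  have hHdiff : ∀ z ∈ R, HasFDerivWithinAt H (D z) R z := fun z hz =>
    ((hH.differentiableOn one_ne_zero) z hz).hasFDerivWithinAt
  have hDc : ContinuousOn D R := hH.continuousOn_fderivWithin hRu le_rfl
  have hfc : ContinuousOn f G := fun q hq => (hdf q hq).continuousAt.continuousWithinAt
  have hHmapsTo : Set.MapsTo H R G := fun z hz => hHG z hz
  have hgc : ContinuousOn g R := hfc.comp hH.continuousOn hHmapsTo
  have hcont_gen : ∀ v : ℝ × ℝ, ContinuousOn (fun z => g z * ((D z v).1 + c * (D z v).2)) R := by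
    intro v
    have h0 : ContinuousOn (fun z => D z v) R := hDc.clm_apply continuousOn_const
    exact hgc.mul ((continuous_fst.comp_continuousOn h0).add
      (continuousOn_const.mul (continuous_snd.comp_continuousOn h0)))
  -- cover by sets carrying local primitives
  have cover : ∀ z : R, ∃ O : Set (ℝ × ℝ), IsOpen O ∧ (z : ℝ × ℝ) ∈ O ∧
      ∃ 𝔉 : ℂ → ℂ, ∀ x ∈ O ∩ R, HasDerivAt 𝔉 (g x) ((H x).1 + c * (H x).2) := by
    rintro ⟨z, hz⟩
    obtain ⟨U, hUopen, hUmem, 𝔉, h𝔉⟩ := local_primitive hG hdf hc hkey (hHG z hz)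
    have hpre : H ⁻¹' U ∈ nhdsWithin z R :=
      (hH.continuousOn z hz) (hUopen.mem_nhds hUmem)
    obtain ⟨O, hOopen, hzO, hOsub⟩ := mem_nhdsWithin.mp hpre
    exact ⟨O, hOopen, hzO, 𝔉, fun x hx => h𝔉 (H x) (hOsub ⟨hx.1, hx.2⟩)⟩
  choose O hOopen hOmem 𝔉s h𝔉s using cover
  obtain ⟨δ, hδ0, hcov⟩ := lebesgue_number_lemma_of_metric hRc hOopen
    (fun x hx => Set.mem_iUnion.mpr ⟨⟨x, hx⟩, hOmem _⟩)
  -- choose the grid size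
  obtain ⟨n, hn⟩ := exists_nat_gt (max 1 (s - r) / δ)
  have hmax0 : (0:ℝ) < max 1 (s - r) := lt_of_lt_of_le one_pos (le_max_left _ _)
  have hn0 : (0:ℝ) < n := lt_trans (div_pos hmax0 hδ0) hn
  have hnnat : 0 < n := by exact_mod_cast hn0
  have hstep : max 1 (s - r) / n < δ := by
    rw [div_lt_iff₀ hn0]
    rw [div_lt_iff₀ hδ0] at hn
    linarith [hn]
  set hj : ℕ → ℝ := fun j => (j : ℝ) / n with hhj
  set tk : ℕ → ℝ := fun k => r + (k : ℝ) * (s - r) / n with htk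
  have hj0 : hj 0 = 0 := by simp [hhj]
  have hjn : hj n = 1 := by rw [hhj]; field_simp
  have tk0 : tk 0 = r := by simp [htk]
  have tkn : tk n = s := by rw [htk]; field_simp; ring
  have hsr : (0:ℝ) ≤ s - r := by linarith
  have hj_le : ∀ j : ℕ, hj j ≤ hj (j+1) := by
    intro j; simp only [hhj]
    gcongr
    exact_mod_cast Nat.le_succ j
  have tk_le : ∀ k : ℕ, tk k ≤ tk (k+1) := by
    intro k; simp only [htk]
    gcongr
    exact_mod_cast Nat.le_succ k
  have hj_mem : ∀ j ≤ n, hj j ∈ Icc (0:ℝ) 1 := by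
    intro j hj'
    rw [hhj]
    constructor
    · positivity
    · rw [div_le_one hn0]; exact_mod_cast hj'
  have tk_mem : ∀ k ≤ n, tk k ∈ Icc r s := by
    intro k hk'
    rw [htk]
    have hkn : (k:ℝ) ≤ n := by exact_mod_cast hk'
    constructor
    · have : (0:ℝ) ≤ (k:ℝ) * (s - r) / n := by positivity
      linarith
    · have h1 : (k:ℝ) * (s - r) / n ≤ (n:ℝ) * (s - r) / n := by gcongr
      have h2 : (n:ℝ) * (s - r) / n = s - r := by field_simp
      linarith
  -- step bounds
  have hj_diff : ∀ j : ℕ, hj (j+1) - hj j = 1 / n := by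
    intro j; rw [hhj]; push_cast; ring
  have tk_diff : ∀ k : ℕ, tk (k+1) - tk k = (s - r) / n := by
    intro k; rw [htk]; push_cast; ring
  -- cells are inside R and small
  have cell_sub_R : ∀ j < n, ∀ k < n,
      Icc (hj j) (hj (j+1)) ×ˢ Icc (tk k) (tk (k+1)) ⊆ R := by
    intro j hj' k hk'
    rw [hRdef]
    apply Set.prod_mono
    · exact Icc_subset_Icc (hj_mem j hj'.le).1 (hj_mem (j+1) hj').2
    · exact Icc_subset_Icc (tk_mem k hk'.le).1 (tk_mem (k+1) hk').2
  have cellprim : ∀ j < n, ∀ k < n, ∃ 𝔉 : ℂ → ℂ,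
      ∀ x ∈ Icc (hj j) (hj (j+1)) ×ˢ Icc (tk k) (tk (k+1)),
      HasDerivAt 𝔉 (g x) ((H x).1 + c * (H x).2) := by
    intro j hj' k hk'
    have hcorner : ((hj j, tk k) : ℝ × ℝ) ∈ R :=
      Set.mem_prod.mpr ⟨hj_mem j hj'.le, tk_mem k hk'.le⟩
    obtain ⟨i, hi⟩ := hcov _ hcorner
    have hball : Icc (hj j) (hj (j+1)) ×ˢ Icc (tk k) (tk (k+1)) ⊆ ball ((hj j, tk k) : ℝ × ℝ) δ := by
      intro x hx
      obtain ⟨hx1, hx2⟩ := Set.mem_prod.mp hx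
      rw [mem_ball, Prod.dist_eq]
      have e1 : dist x.1 (hj j) ≤ max 1 (s - r) / n := by
        rw [Real.dist_eq, abs_of_nonneg (by linarith [hx1.1])]
        have := hj_diff j
        have h1n : (1:ℝ) / n ≤ max 1 (s - r) / n := by gcongr; exact le_max_left _ _
        linarith [hx1.2]
      have e2 : dist x.2 (tk k) ≤ max 1 (s - r) / n := by
        rw [Real.dist_eq, abs_of_nonneg (by linarith [hx2.1])]
        have hd := tk_diff k
        have h1n : (s - r) / n ≤ max 1 (s - r) / n := by gcongr; exact le_max_right _ _
        calc x.2 - tk k ≤ tk (k+1) - tk k := by linarith [hx2.2]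
          _ = (s - r) / n := hd
          _ ≤ max 1 (s - r) / n := h1n
      exact lt_of_le_of_lt (max_le e1 e2) hstep
    refine ⟨𝔉s i, fun x hx => h𝔉s i x ⟨hi (hball hx), cell_sub_R j hj' k hk' hx⟩⟩
  -- the three families of integrals
  set Bint : ℕ → ℕ → ℂ := fun j k => ∫ t in tk k..tk (k+1), g (hj j, t) * ut (hj j, t) with hBdef
  set Lint : ℕ → ℕ → ℂ := fun j k => ∫ h in hj j..hj (j+1), g (h, tk k) * uh (h, tk k) with hLdef
  set J : ℕ → ℂ := fun j => ∫ t in r..s, g (hj j, t) * ut (hj j, t) with hJdef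
  -- evaluation of horizontal edges via a primitive
  have edgeB : ∀ j ≤ n, ∀ k < n, ∀ 𝔉 : ℂ → ℂ,
      (∀ t ∈ Icc (tk k) (tk (k+1)),
        HasDerivAt 𝔉 (g (hj j, t)) ((H (hj j, t)).1 + c * (H (hj j, t)).2)) →
      Bint j k = 𝔉 ((H (hj j, tk (k+1))).1 + c * (H (hj j, tk (k+1))).2)
               - 𝔉 ((H (hj j, tk k)).1 + c * (H (hj j, tk k)).2) := by
    intro j hjn' k hkn' 𝔉 hp
    have hmap : Set.MapsTo (fun t : ℝ => ((hj j, t) : ℝ × ℝ)) (Icc (tk k) (tk (k+1))) R := by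
      intro t htm
      exact Set.mem_prod.mpr ⟨hj_mem j hjn',
        ⟨le_trans (tk_mem k (le_of_lt hkn')).1 htm.1, le_trans htm.2 (tk_mem (k+1) hkn').2⟩⟩
    show (∫ t in tk k..tk (k+1), g (hj j, t) * ut (hj j, t))
      = 𝔉 ((H (hj j, tk (k+1))).1 + c * (H (hj j, tk (k+1))).2)
      - 𝔉 ((H (hj j, tk k)).1 + c * (H (hj j, tk k)).2)
    refine ftc_edge (V := fun t => 𝔉 ((H (hj j, t)).1 + c * (H (hj j, t)).2)) (tk_le k) ?_ ?_
    · intro t htm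
      exact edge_hasDeriv (L := fun t => ((hj j, t) : ℝ × ℝ)) (w := ((0:ℝ),(1:ℝ)))
        (fun τ => (hasDerivAt_const τ (hj j)).prodMk (hasDerivAt_id τ)) hmap hHdiff hp htm
    · exact (hcont_gen ((0:ℝ),(1:ℝ))).comp
        ((continuous_const.prodMk continuous_id).continuousOn) hmap
  have edgeL : ∀ j < n, ∀ k ≤ n, ∀ 𝔉 : ℂ → ℂ,
      (∀ h ∈ Icc (hj j) (hj (j+1)),
        HasDerivAt 𝔉 (g (h, tk k)) ((H (h, tk k)).1 + c * (H (h, tk k)).2)) →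
      Lint j k = 𝔉 ((H (hj (j+1), tk k)).1 + c * (H (hj (j+1), tk k)).2)
               - 𝔉 ((H (hj j, tk k)).1 + c * (H (hj j, tk k)).2) := by
    intro j hjn' k hkn' 𝔉 hp
    have hmap : Set.MapsTo (fun h : ℝ => ((h, tk k) : ℝ × ℝ)) (Icc (hj j) (hj (j+1))) R := by
      intro h htm
      exact Set.mem_prod.mpr ⟨⟨le_trans (hj_mem j (le_of_lt hjn')).1 htm.1,
        le_trans htm.2 (hj_mem (j+1) hjn').2⟩, tk_mem k hkn'⟩
    show (∫ h in hj j..hj (j+1), g (h, tk k) * uh (h, tk k))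
      = 𝔉 ((H (hj (j+1), tk k)).1 + c * (H (hj (j+1), tk k)).2)
      - 𝔉 ((H (hj j, tk k)).1 + c * (H (hj j, tk k)).2)
    refine ftc_edge (V := fun h => 𝔉 ((H (h, tk k)).1 + c * (H (h, tk k)).2)) (hj_le j) ?_ ?_
    · intro h htm
      exact edge_hasDeriv (L := fun h => ((h, tk k) : ℝ × ℝ)) (w := ((1:ℝ),(0:ℝ)))
        (fun τ => (hasDerivAt_id τ).prodMk (hasDerivAt_const τ (tk k))) hmap hHdiff hp htm
    · exact (hcont_gen ((1:ℝ),(0:ℝ))).comp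
        ((continuous_id.prodMk continuous_const).continuousOn) hmap
  -- cell identity
  have cellId : ∀ j < n, ∀ k < n, Bint (j+1) k - Bint j k = Lint j (k+1) - Lint j k := by
    intro j hj' k hk'
    obtain ⟨𝔉, h𝔉⟩ := cellprim j hj' k hk'
    have memL : hj j ∈ Icc (hj j) (hj (j+1)) := left_mem_Icc.mpr (hj_le j)
    have memRt : hj (j+1) ∈ Icc (hj j) (hj (j+1)) := right_mem_Icc.mpr (hj_le j)
    have memB : tk k ∈ Icc (tk k) (tk (k+1)) := left_mem_Icc.mpr (tk_le k)
    have memT : tk (k+1) ∈ Icc (tk k) (tk (k+1)) := right_mem_Icc.mpr (tk_le k)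
    have hB1 := edgeB (j+1) hj' k hk' 𝔉
      (fun t htm => h𝔉 _ (Set.mem_prod.mpr ⟨memRt, htm⟩))
    have hB0 := edgeB j hj'.le k hk' 𝔉
      (fun t htm => h𝔉 _ (Set.mem_prod.mpr ⟨memL, htm⟩))
    have hL1 := edgeL j hj' (k+1) hk' 𝔉
      (fun h htm => h𝔉 _ (Set.mem_prod.mpr ⟨htm, memT⟩))
    have hL0 := edgeL j hj' k hk'.le 𝔉
      (fun h htm => h𝔉 _ (Set.mem_prod.mpr ⟨htm, memB⟩))
    rw [hB1, hB0, hL1, hL0]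
    ring
  -- integrability of horizontal integrands on pieces
  have hInt : ∀ j ≤ n, ∀ k < n, IntervalIntegrable
      (fun t => g (hj j, t) * ut (hj j, t)) MeasureTheory.volume (tk k) (tk (k+1)) := by
    intro j hjn' k hkn'
    have hmap : Set.MapsTo (fun t : ℝ => ((hj j, t) : ℝ × ℝ)) (Icc (tk k) (tk (k+1))) R := by
      intro t htm
      exact Set.mem_prod.mpr ⟨hj_mem j hjn',
        ⟨le_trans (tk_mem k hkn'.le).1 htm.1, le_trans htm.2 (tk_mem (k+1) hkn').2⟩⟩
    have hco : ContinuousOn (fun t => g (hj j, t) * ut (hj j, t)) (Icc (tk k) (tk (k+1))) :=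
      (hcont_gen ((0:ℝ),(1:ℝ))).comp
        ((continuous_const.prodMk continuous_id).continuousOn) hmap
    exact (hco.mono (by rw [uIcc_of_le (tk_le k)])).intervalIntegrable
  have rowSum : ∀ j ≤ n, J j = ∑ k ∈ Finset.range n, Bint j k := by
    intro j hjn'
    have := intervalIntegral.sum_integral_adjacent_intervals
      (f := fun t => g (hj j, t) * ut (hj j, t)) (μ := MeasureTheory.volume) (a := tk)
      (fun k hk => hInt j hjn' k hk)
    rw [tk0, tkn] at this
    exact this.symm
  -- vertical edges on the two horizontal boundary lines agree
  have hLedge : ∀ j < n, Lint j n = Lint j 0 := by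
    intro j hj'
    show (∫ h in hj j..hj (j+1), g (h, tk n) * uh (h, tk n))
       = ∫ h in hj j..hj (j+1), g (h, tk 0) * uh (h, tk 0)
    apply intervalIntegral.integral_congr
    intro h hh
    have hhm : h ∈ Icc (0:ℝ) 1 := by
      rw [uIcc_of_le (hj_le j)] at hh
      exact ⟨le_trans (hj_mem j hj'.le).1 hh.1, le_trans hh.2 (hj_mem (j+1) hj').2⟩
    have hmemr : ((h, r) : ℝ × ℝ) ∈ R := Set.mem_prod.mpr ⟨hhm, left_mem_Icc.mpr hrs.le⟩
    have hmems : ((h, s) : ℝ × ℝ) ∈ R := Set.mem_prod.mpr ⟨hhm, right_mem_Icc.mpr hrs.le⟩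
    have hgeq : H (h, tk n) = H (h, tk 0) := by
      rw [tkn, tk0]; exact (hHclosed h hhm).symm
    have hDeq : D (h, s) ((1:ℝ),(0:ℝ)) = D (h, r) ((1:ℝ),(0:ℝ)) := by
      have lmap : Set.MapsTo (fun x : ℝ => ((x, r) : ℝ × ℝ)) (Icc (0:ℝ) 1) R := by
        intro x hx; exact Set.mem_prod.mpr ⟨hx, left_mem_Icc.mpr hrs.le⟩
      have lmap' : Set.MapsTo (fun x : ℝ => ((x, s) : ℝ × ℝ)) (Icc (0:ℝ) 1) R := by
        intro x hx; exact Set.mem_prod.mpr ⟨hx, right_mem_Icc.mpr hrs.le⟩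
      have d1 : HasDerivWithinAt (fun x : ℝ => H (x, r)) (D (h, r) ((1:ℝ),(0:ℝ))) (Icc 0 1) h :=
        (hHdiff (h, r) hmemr).comp_hasDerivWithinAt h
          (((hasDerivAt_id h).prodMk (hasDerivAt_const h r)).hasDerivWithinAt) lmap
      have d2 : HasDerivWithinAt (fun x : ℝ => H (x, s)) (D (h, s) ((1:ℝ),(0:ℝ))) (Icc 0 1) h :=
        (hHdiff (h, s) hmems).comp_hasDerivWithinAt h
          (((hasDerivAt_id h).prodMk (hasDerivAt_const h s)).hasDerivWithinAt) lmap'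
      have d2' : HasDerivWithinAt (fun x : ℝ => H (x, r)) (D (h, s) ((1:ℝ),(0:ℝ))) (Icc 0 1) h :=
        d2.congr (fun y hy => hHclosed y hy) (hHclosed h hhm)
      have hu : UniqueDiffWithinAt ℝ (Icc (0:ℝ) 1) h := (uniqueDiffOn_Icc zero_lt_one) h hhm
      rw [← d1.derivWithin hu, ← d2'.derivWithin hu]
    have huheq : uh (h, tk n) = uh (h, tk 0) := by
      simp only [hutdef, huhdef, tkn, tk0, hDeq]
    rw [hgdef]
    simp only [hgeq, huheq]
  -- rows are constant
  have rowStep : ∀ j < n, J (j+1) = J j := by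
    intro j hj'
    have h1 : J (j+1) - J j = ∑ k ∈ Finset.range n, (Bint (j+1) k - Bint j k) := by
      rw [rowSum (j+1) hj', rowSum j hj'.le, Finset.sum_sub_distrib]
    have h2 : ∑ k ∈ Finset.range n, (Bint (j+1) k - Bint j k)
        = ∑ k ∈ Finset.range n, (Lint j (k+1) - Lint j k) :=
      Finset.sum_congr rfl (fun k hk => cellId j hj' k (Finset.mem_range.mp hk))
    have h3 : ∑ k ∈ Finset.range n, (Lint j (k+1) - Lint j k) = Lint j n - Lint j 0 :=
      Finset.sum_range_sub (fun k => Lint j k) n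
    have : J (j+1) - J j = 0 := by
      rw [h1, h2, h3, hLedge j hj', sub_self]
    linear_combination this
  -- row zero vanishes
  have J0 : J 0 = 0 := by
    rw [rowSum 0 (Nat.zero_le n)]
    apply Finset.sum_eq_zero
    intro k hk
    have hk' : k < n := Finset.mem_range.mp hk
    obtain ⟨𝔉, h𝔉⟩ := cellprim 0 hnnat k hk'
    have memL : hj 0 ∈ Icc (hj 0) (hj 1) := left_mem_Icc.mpr (hj_le 0)
    rw [edgeB 0 (Nat.zero_le n) k hk' 𝔉
      (fun t htm => h𝔉 _ (Set.mem_prod.mpr ⟨memL, htm⟩))]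
    have e1 : H (hj 0, tk (k+1)) = H (0, r) := by
      rw [hj0]; exact hH0 _ (tk_mem (k+1) hk')
    have e2 : H (hj 0, tk k) = H (0, r) := by
      rw [hj0]; exact hH0 _ (tk_mem k hk'.le)
    rw [e1, e2, sub_self]
  -- all rows vanish
  have Jconst : ∀ j ≤ n, J j = 0 := by
    intro j
    induction j with
    | zero => intro _; exact J0
    | succ j ih => intro hj'; rw [rowStep j hj']; exact ih (le_of_lt hj')
  -- identify the goal with row n
  have hgoal : (∫ t in r..s, f (p t) * ((p' t).1 + c * (p' t).2)) = J n := by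
    show _ = ∫ t in r..s, g (hj n, t) * ut (hj n, t)
    apply intervalIntegral.integral_congr
    intro t htm
    rw [uIcc_of_le hrs.le] at htm
    have hmem1 : ((1, t) : ℝ × ℝ) ∈ R := Set.mem_prod.mpr ⟨⟨zero_le_one, le_refl 1⟩, htm⟩
    have lmap : Set.MapsTo (fun τ : ℝ => ((1, τ) : ℝ × ℝ)) (Icc r s) R := by
      intro τ hτ; exact Set.mem_prod.mpr ⟨⟨zero_le_one, le_refl 1⟩, hτ⟩
    have d1 : HasDerivWithinAt (fun τ : ℝ => H (1, τ)) (D (1, t) ((0:ℝ),(1:ℝ))) (Icc r s) t :=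
      (hHdiff (1, t) hmem1).comp_hasDerivWithinAt t
        (((hasDerivAt_const t (1:ℝ)).prodMk (hasDerivAt_id t)).hasDerivWithinAt) lmap
    have d2 : HasDerivWithinAt (fun τ : ℝ => H (1, τ)) (p' t) (Icc r s) t :=
      ((hderiv t htm).hasDerivWithinAt).congr (fun y hy => hH1 y hy) (hH1 t htm)
    have hu : UniqueDiffWithinAt ℝ (Icc r s) t := (uniqueDiffOn_Icc hrs) t htm
    have hDt : D (1, t) ((0:ℝ),(1:ℝ)) = p' t := by
      rw [← d1.derivWithin hu, ← d2.derivWithin hu]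
    show f (p t) * ((p' t).1 + c * (p' t).2) = g (hj n, t) * ut (hj n, t)
    have hfp : g (hj n, t) = f (p t) := by
      rw [hgdef, hjn]
      simp only
      rw [hH1 t htm]
    have hut : ut (hj n, t) = (p' t).1 + c * (p' t).2 := by
      rw [hutdef, hjn]
      simp only
      rw [hDt]
    rw [hfp, hut]
  rw [hgoal]
  exact Jconst n le_rfl

/-- Bicomplex multiplication on ℂ × ℂ. -/
def bmul (p q : ℂ × ℂ) : ℂ × ℂ := (p.1 * q.1 - p.2 * q.2, p.2 * q.1 + p.1 * q.2)

theorem bicomplex_cauchy_theorem (G : Set (ℂ × ℂ)) (hG : IsOpen G)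
    (φ₁ φ₂ : ℂ × ℂ → ℂ)
    (hd₁ : ∀ q ∈ G, DifferentiableAt ℂ φ₁ q)
    (hd₂ : ∀ q ∈ G, DifferentiableAt ℂ φ₂ q)
    (hcr₁ : ∀ q ∈ G, fderiv ℂ φ₁ q (1, 0) = fderiv ℂ φ₂ q (0, 1))
    (hcr₂ : ∀ q ∈ G, fderiv ℂ φ₂ q (1, 0) = -fderiv ℂ φ₁ q (0, 1))
    (r s : ℝ) (hrs : r ≤ s) (p p' : ℝ → ℂ × ℂ)
    (hmem : ∀ t ∈ Set.Icc r s, p t ∈ G)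
    (hderiv : ∀ t ∈ Set.Icc r s, HasDerivAt p (p' t) t)
    (hcont : ContinuousOn p' (Set.Icc r s))
    (hclosed : p r = p s)
    (H : ℝ × ℝ → ℂ × ℂ)
    (hH : ContDiffOn ℝ 1 H (Set.Icc 0 1 ×ˢ Set.Icc r s))
    (hHG : ∀ q ∈ Set.Icc (0 : ℝ) 1 ×ˢ Set.Icc r s, H q ∈ G)
    (hH1 : ∀ t ∈ Set.Icc r s, H (1, t) = p t)
    (hHclosed : ∀ h ∈ Set.Icc (0 : ℝ) 1, H (h, r) = H (h, s))
    (hH0 : ∀ t ∈ Set.Icc r s, H (0, t) = H (0, r)) :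
    ∫ t in r..s, bmul (φ₁ (p t), φ₂ (p t)) (p' t) = 0 := by
  rcases eq_or_lt_of_le hrs with heq | hlt
  · subst heq
    simp
  · set fP : ℂ × ℂ → ℂ := fun q => φ₁ q + Complex.I * φ₂ q with hfp
    set fM : ℂ × ℂ → ℂ := fun q => φ₁ q - Complex.I * φ₂ q with hfm
    have hdp : ∀ q ∈ G, DifferentiableAt ℂ fP q := fun q hq =>
      (hd₁ q hq).add ((hd₂ q hq).const_mul Complex.I)
    have hdm : ∀ q ∈ G, DifferentiableAt ℂ fM q := fun q hq =>
      (hd₁ q hq).sub ((hd₂ q hq).const_mul Complex.I)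
    have hfdp : ∀ q ∈ G, ∀ v : ℂ × ℂ,
        fderiv ℂ fP q v = fderiv ℂ φ₁ q v + Complex.I * fderiv ℂ φ₂ q v := by
      intro q hq v
      have h2 := hd₂ q hq
      have hE : fderiv ℂ fP q = fderiv ℂ φ₁ q + Complex.I • fderiv ℂ φ₂ q := by
        rw [hfp]
        rw [fderiv_fun_add (hd₁ q hq) (h2.const_mul Complex.I), fderiv_const_mul h2]
      rw [hE]; simp
    have hfdm : ∀ q ∈ G, ∀ v : ℂ × ℂ,
        fderiv ℂ fM q v = fderiv ℂ φ₁ q v - Complex.I * fderiv ℂ φ₂ q v := by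
      intro q hq v
      have h2 := hd₂ q hq
      have hE : fderiv ℂ fM q = fderiv ℂ φ₁ q - Complex.I • fderiv ℂ φ₂ q := by
        rw [hfm]
        rw [fderiv_fun_sub (hd₁ q hq) (h2.const_mul Complex.I), fderiv_const_mul h2]
      rw [hE]; simp
    have hkp : ∀ q ∈ G, fderiv ℂ fP q (0, 1) = Complex.I * fderiv ℂ fP q (1, 0) := by
      intro q hq
      rw [hfdp q hq, hfdp q hq]
      have c1 := hcr₁ q hq
      have c2 := hcr₂ q hq
      linear_combination c2 - Complex.I * c1 - fderiv ℂ φ₂ q (1, 0) * Complex.I_sq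
    have hkm : ∀ q ∈ G, fderiv ℂ fM q (0, 1) = (-Complex.I) * fderiv ℂ fM q (1, 0) := by
      intro q hq
      rw [hfdm q hq, hfdm q hq]
      have c1 := hcr₁ q hq
      have c2 := hcr₂ q hq
      linear_combination c2 + Complex.I * c1 - fderiv ℂ φ₂ q (1, 0) * Complex.I_sq
    have keyp := key_lemma hG hdp Complex.norm_I hkp hlt hderiv H hH hHG hH1 hHclosed hH0
    have keym := key_lemma hG hdm (by rw [norm_neg]; exact Complex.norm_I) hkm hlt hderiv
      H hH hHG hH1 hHclosed hH0
    set w₁ : ℂ × ℂ := ((1:ℂ)/2, -Complex.I/2) with hw1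
    set w₂ : ℂ × ℂ := ((1:ℂ)/2, Complex.I/2) with hw2
    have hint : ∀ t : ℝ, bmul (φ₁ (p t), φ₂ (p t)) (p' t)
        = (fP (p t) * ((p' t).1 + Complex.I * (p' t).2)) • w₁
        + (fM (p t) * ((p' t).1 + (-Complex.I) * (p' t).2)) • w₂ := by
      intro t
      rw [hfp, hfm, hw1, hw2, bmul]
      apply Prod.ext
      · simp only [Prod.fst_add, Prod.smul_fst, smul_eq_mul]
        linear_combination (-(φ₂ (p t) * (p' t).2)) * Complex.I_sq
      · simp only [Prod.snd_add, Prod.smul_snd, smul_eq_mul]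
        linear_combination (φ₂ (p t) * (p' t).1 + φ₁ (p t) * (p' t).2) * Complex.I_sq
    -- integrability
    have hpc : ContinuousOn p (Icc r s) := fun t ht =>
      (hderiv t ht).continuousAt.continuousWithinAt
    have hpm : Set.MapsTo p (Icc r s) G := fun t ht => hmem t ht
    have hfpc : ContinuousOn fP G := fun q hq => (hdp q hq).continuousAt.continuousWithinAt
    have hfmc : ContinuousOn fM G := fun q hq => (hdm q hq).continuousAt.continuousWithinAt
    have hX : IntervalIntegrable
        (fun t => (fP (p t) * ((p' t).1 + Complex.I * (p' t).2)) • w₁)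
        MeasureTheory.volume r s := by
      apply ContinuousOn.intervalIntegrable
      rw [uIcc_of_le hrs]
      exact (((hfpc.comp hpc hpm).mul ((continuous_fst.comp_continuousOn hcont).add
        (continuousOn_const.mul (continuous_snd.comp_continuousOn hcont)))).smul
        continuousOn_const)
    have hY : IntervalIntegrable
        (fun t => (fM (p t) * ((p' t).1 + (-Complex.I) * (p' t).2)) • w₂)
        MeasureTheory.volume r s := by
      apply ContinuousOn.intervalIntegrable
      rw [uIcc_of_le hrs]
      exact (((hfmc.comp hpc hpm).mul ((continuous_fst.comp_continuousOn hcont).add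
        (continuousOn_const.mul (continuous_snd.comp_continuousOn hcont)))).smul
        continuousOn_const)
    have hsplit : (∫ t in r..s, bmul (φ₁ (p t), φ₂ (p t)) (p' t))
        = (∫ t in r..s, (fP (p t) * ((p' t).1 + Complex.I * (p' t).2)) • w₁)
        + (∫ t in r..s, (fM (p t) * ((p' t).1 + (-Complex.I) * (p' t).2)) • w₂) := by
      rw [← intervalIntegral.integral_add hX hY]
      apply intervalIntegral.integral_congr
      intro t _
      exact hint t
    rw [hsplit, intervalIntegral.integral_smul_const, intervalIntegral.integral_smul_const,
      keyp, keym]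
    simp
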